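/- Let L : ℂ → ℂ be an invertible real-linear map and let S(z) = cz with c ∈ ℂ, c ∉ ℝ (so in particular c ≠ ±1). If L ∘ S ∘ L⁻¹ equals multiplication by some complex number c', then c' = c or c' = conj(c), and L is complex-linear or complex-antilinear respectively. -/
import Mathlib


/-- If L conjugates multiplication by a non-real c to multiplication by c', then
either c' = c and L is complex-linear, or c' = conj c and L is complex-antilinear. -/
theorem conjugated_multiplier_is_c_or_conj (L : ℂ ≃ₗ[ℝ] ℂ) (c : ℂ) (hc : c.im ≠ 0)
    (c' : ℂ) (hconj : ∀ z : ℂ, L (c * L.symm z) = c' * z) :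
    (c' = c ∧ ∀ (a : ℂ) (z : ℂ), L (a * z) = a * L z) ∨
    (c' = (starRingEnd ℂ) c ∧ ∀ (a : ℂ) (z : ℂ), L (a * z) = (starRingEnd ℂ) a * L z) := by
  set p := L 1 with hp
  set q := L Complex.I with hq
  have h : ∀ z : ℂ, L (c * z) = c' * L z := fun z => by
    have := hconj (L z); rwa [L.symm_apply_apply] at this
  have hL : ∀ z : ℂ, L z = z.re * p + z.im * q := fun z => by
    conv_lhs => rw [← Complex.re_add_im z,
      show (↑z.re + ↑z.im * Complex.I : ℂ) = z.re • (1:ℂ) + z.im • Complex.I by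
        simp [Complex.real_smul]]
    rw [map_add, map_smul, map_smul]
    simp [Complex.real_smul, hp, hq]
  have hp0 : p ≠ 0 := fun h0 =>
    one_ne_zero (L.injective (by rw [map_zero]; exact h0))
  have him : (c.im : ℂ) ≠ 0 := Complex.ofReal_ne_zero.mpr hc
  have e1 : (c.im : ℂ) * q = (c' - c.re) * p := by
    have h1 := h 1
    rw [mul_one, hL c] at h1
    linear_combination h1
  have e2 : (c' - c.re) * q = -(c.im : ℂ) * p := by
    have h2 := h Complex.I
    rw [hL (c * Complex.I)] at h2
    simp [Complex.mul_re, Complex.mul_im] at h2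
    linear_combination -h2
  have key : (c' - c.re - c.im * Complex.I) * (c' - c.re + c.im * Complex.I) = 0 := by
    have hsq : ((c' - c.re) ^ 2 + (c.im : ℂ) ^ 2) * p = 0 := by
      linear_combination (-(c' - c.re)) * e1 + (c.im : ℂ) * e2
    have hz : (c' - c.re) ^ 2 + (c.im : ℂ) ^ 2 = 0 :=
      (mul_eq_zero.mp hsq).resolve_right hp0
    have hI := Complex.I_sq
    linear_combination hz - (c.im : ℂ)^2 * hI
  have hre : (c.re : ℂ) + c.im * Complex.I = c := Complex.re_add_im c
  rcases mul_eq_zero.mp key with h0 | h0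
  · -- c' = c, linear case
    have hc' : c' = c := by linear_combination h0 + hre
    have hqp : q = Complex.I * p := by
      apply mul_left_cancel₀ him
      rw [e1, hc']
      linear_combination p * hre.symm
    have hLz : ∀ z : ℂ, L z = z * p := fun z => by
      rw [hL z, hqp]
      linear_combination p * Complex.re_add_im z
    exact Or.inl ⟨hc', fun a z => by rw [hLz, hLz]; ring⟩
  · -- c' = conj c, antilinear case
    have hcj : (starRingEnd ℂ) c = (c.re : ℂ) - c.im * Complex.I := by
      rw [← hre]; simp [Complex.ext_iff]
    have hc' : c' = (starRingEnd ℂ) c := by rw [hcj]; linear_combination h0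
    have hqp : q = -(Complex.I * p) := by
      apply mul_left_cancel₀ him
      rw [e1, hc', hcj]
      ring
    have hLz : ∀ z : ℂ, L z = (starRingEnd ℂ) z * p := fun z => by
      rw [hL z, hqp]
      have : (starRingEnd ℂ) z = (z.re : ℂ) - z.im * Complex.I := by
        rw [← Complex.re_add_im z]; simp [Complex.ext_iff]
      rw [this]; ring
    refine Or.inr ⟨hc', fun a z => by rw [hLz, hLz, map_mul]; ring⟩
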